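/- arXiv:1504.05064 — 3 statements merged into one kernel-verified Lean document; each statement's English description precedes it below -/
import Mathlib

section
/- Let $b:\overline{\mathbb{D}}\setminus\{1\}\to\mathbb{C}$ be analytic on the open unit disc, and suppose there exist constants $C_1,C_2>0$ and $\beta\in(0,1)$ such that for all $u>0$, $h>0$, and $\theta\in(-\pi,\pi]$ one has $|b(e^{-(u-i\theta)})|\le C_1$ and $|b(e^{-(u-i(\theta+h))}) - b(e^{-(u-i\theta)})| \le C_2 h^{\beta} |u-i\theta|^{-\beta}$. Then the Taylor coefficients $b_n$ of $b$ at $0$ satisfy $b_n = O(n^{-\beta})$. -/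
open Complex Real Filter MeasureTheory intervalIntegral
-- orthogonality
lemma orth (m : ℤ) : (∫ θ : ℝ in (-π)..π, Complex.exp (m * Complex.I * θ)) =
    if m = 0 then (2*π : ℂ) else 0 := by
  rcases eq_or_ne m 0 with hm | hm
  · simp [hm, two_mul]
  · rw [if_neg hm]
    have hmI : (m : ℂ) * Complex.I ≠ 0 := by
      simp [Complex.I_ne_zero, Int.cast_eq_zero, hm]
    rw [integral_exp_mul_complex hmI]
    have : Complex.exp ((m:ℂ) * Complex.I * (π:ℂ)) =
        Complex.exp ((m:ℂ) * Complex.I * ((-π : ℝ):ℂ)) := by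
      rw [show (m:ℂ) * Complex.I * (π:ℂ) =
        (m:ℂ) * Complex.I * (((-π:ℝ)):ℂ) + (m:ℤ) * (2 * (π:ℂ) * Complex.I) by
          push_cast; ring, Complex.exp_add, Complex.exp_int_mul_two_pi_mul_I, mul_one]
    rw [this]; simp

lemma coeff_formula (b : ℂ → ℂ) (c : ℕ → ℂ)
    (hc : ∀ z ∈ Metric.ball (0:ℂ) 1, HasSum (fun n : ℕ => c n * z ^ n) (b z))
    (r : ℝ) (hr0 : 0 < r) (hr1 : r < 1) (n : ℕ) :
    (∫ θ : ℝ in (-π)..π,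
        b ((r:ℂ) * Complex.exp (Complex.I * θ)) * Complex.exp (-(n:ℂ) * Complex.I * θ))
      = 2 * π * c n * (r:ℂ) ^ n := by
  have hpi : (-π : ℝ) ≤ π := by linarith [pi_pos]
  set z : ℝ → ℂ := fun θ => (r:ℂ) * Complex.exp (Complex.I * θ) with hz
  have habs : ∀ θ : ℝ, ‖z θ‖ = r := by
    intro θ
    simp [hz, Complex.norm_exp, abs_of_pos hr0]
  have hzmem : ∀ θ : ℝ, z θ ∈ Metric.ball (0:ℂ) 1 := by
    intro θ
    simp only [Metric.mem_ball, dist_zero_right, habs θ]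
    exact hr1
  set F : ℕ → ℝ → ℂ := fun k θ => c k * (z θ) ^ k * Complex.exp (-(n:ℂ) * Complex.I * θ)
    with hF
  set μ : MeasureTheory.Measure ℝ := MeasureTheory.volume.restrict (Set.Ioc (-π) π) with hμ
  have hcontF : ∀ k, Continuous (F k) := by
    intro k
    have : Continuous z := by fun_prop
    fun_prop
  have hInt : ∀ k, MeasureTheory.Integrable (F k) μ := fun k => (hcontF k).integrableOn_Ioc
  have hnorm : ∀ (k : ℕ) (θ : ℝ), ‖F k θ‖ = ‖c k‖ * r ^ k := by
    intro k θ
    simp only [hF, norm_mul, norm_pow, habs θ, Complex.norm_exp]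
    have : (-(n:ℂ) * Complex.I * (θ:ℂ)).re = 0 := by simp
    rw [this, Real.exp_zero, mul_one]
  have hrball : ((r:ℂ)) ∈ Metric.ball (0:ℂ) 1 := by
    simp only [Metric.mem_ball, dist_zero_right, Complex.norm_real, Real.norm_eq_abs,
      abs_of_pos hr0]
    exact hr1
  have hsum_r : Summable (fun k : ℕ => ‖c k‖ * r ^ k) := by
    have h1 : Summable (fun k : ℕ => c k * (r:ℂ) ^ k) := (hc _ hrball).summable
    have h2 := summable_norm_iff.mpr h1
    convert h2 using 2 with k
    simp [abs_of_pos hr0]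
  have hFsumnorm : Summable fun k => ∫ θ, ‖F k θ‖ ∂μ := by
    have e : ∀ k : ℕ, (∫ θ, ‖F k θ‖ ∂μ)
        = (μ Set.univ).toReal * (‖c k‖ * r ^ k) := by
      intro k
      simp only [hnorm k, MeasureTheory.integral_const, smul_eq_mul, MeasureTheory.measureReal_def]
    simp only [e]
    exact hsum_r.mul_left _
  have key := MeasureTheory.hasSum_integral_of_summable_integral_norm hInt hFsumnorm
  have hterm : ∀ k, (∫ θ, F k θ ∂μ) = if k = n then (2*π:ℂ) * c n * (r:ℂ)^n else 0 := by
    intro k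
    set m : ℤ := (k:ℤ) - (n:ℤ) with hm
    have hFk : ∀ θ : ℝ, F k θ = (c k * (r:ℂ)^k) * Complex.exp ((m:ℂ) * Complex.I * θ) := by
      intro θ
      have h1 : (z θ)^k = (r:ℂ)^k * Complex.exp ((k:ℂ) * (Complex.I * θ)) := by
        simp only [hz]
        rw [mul_pow, ← Complex.exp_nat_mul]
      have h2 : Complex.exp ((k:ℂ) * (Complex.I * θ)) * Complex.exp (-(n:ℂ) * Complex.I * θ)
          = Complex.exp ((m:ℂ) * Complex.I * θ) := by
        rw [← Complex.exp_add]
        congr 1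
        simp only [hm]
        push_cast
        ring
      calc F k θ = c k * (z θ)^k * Complex.exp (-(n:ℂ) * Complex.I * θ) := rfl
        _ = c k * ((r:ℂ)^k * Complex.exp ((k:ℂ) * (Complex.I * θ)))
              * Complex.exp (-(n:ℂ) * Complex.I * θ) := by rw [h1]
        _ = (c k * (r:ℂ)^k) * (Complex.exp ((k:ℂ) * (Complex.I * θ))
              * Complex.exp (-(n:ℂ) * Complex.I * θ)) := by ring
        _ = (c k * (r:ℂ)^k) * Complex.exp ((m:ℂ) * Complex.I * θ) := by rw [h2]
    calc (∫ θ, F k θ ∂μ)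
        = ∫ θ : ℝ in (-π)..π, (c k * (r:ℂ)^k) * Complex.exp ((m:ℂ) * Complex.I * θ) := by
          rw [intervalIntegral.integral_of_le hpi]
          exact MeasureTheory.integral_congr_ae (by filter_upwards with θ; rw [hFk])
      _ = (c k * (r:ℂ)^k) * ∫ θ : ℝ in (-π)..π, Complex.exp ((m:ℂ) * Complex.I * θ) := by
          rw [intervalIntegral.integral_const_mul]
      _ = if k = n then (2*π:ℂ) * c n * (r:ℂ)^n else 0 := by
          rw [orth m]
          rcases eq_or_ne k n with hk | hk
          · subst hk
            rw [if_pos (by omega), if_pos rfl]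
            ring
          · rw [if_neg (by omega), if_neg hk, mul_zero]
  rw [funext hterm] at key
  have key2 := (hasSum_ite_eq n ((2*π:ℂ) * c n * (r:ℂ)^n)).unique key
  rw [intervalIntegral.integral_of_le hpi, key2]
  apply MeasureTheory.integral_congr_ae
  filter_upwards with θ
  exact (((hc (z θ) (hzmem θ)).mul_right _).tsum_eq).symm

theorem stmt2 (b : ℂ → ℂ) (c : ℕ → ℂ) (β C1 C2 : ℝ)
    (hβ : β ∈ Set.Ioo (0:ℝ) 1) (hC1 : 0 < C1) (hC2 : 0 < C2)
    (hb : AnalyticOn ℂ b (Metric.ball (0:ℂ) 1))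
    (hc : ∀ z ∈ Metric.ball (0:ℂ) 1, HasSum (fun n : ℕ => c n * z ^ n) (b z))
    (hbdd : ∀ u θ : ℝ, 0 < u → θ ∈ Set.Ioc (-π) π →
      ‖(b (Complex.exp (-((u : ℂ) - Complex.I * (θ : ℂ)))))‖ ≤ C1)
    (hmod : ∀ u h θ : ℝ, 0 < u → 0 < h → θ ∈ Set.Ioc (-π) π →
      ‖(b (Complex.exp (-((u : ℂ) - Complex.I * ((θ : ℂ) + (h : ℂ))))) -
          b (Complex.exp (-((u : ℂ) - Complex.I * (θ : ℂ)))))‖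
        ≤ C2 * h ^ β * (‖((u : ℂ) - Complex.I * (θ : ℂ))‖) ^ (-β)) :
    ∃ C : ℝ, ∀ n : ℕ, 1 ≤ n → ‖(c n)‖ ≤ C * (n : ℝ) ^ (-β) := by
  obtain ⟨hβ0, hβ1⟩ := hβ
  refine ⟨Real.exp 1 * C2 / (2 * (1 - β)), ?_⟩
  intro n hn
  have hpi : (-π : ℝ) ≤ π := by linarith [pi_pos]
  have npos : (0:ℝ) < n := by exact_mod_cast Nat.pos_of_ne_zero (by omega)
  have nne : (n:ℝ) ≠ 0 := ne_of_gt npos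
  set u : ℝ := 1 / n with hu_def
  have hu : 0 < u := by positivity
  set r : ℝ := Real.exp (-u) with hr_def
  have hr0 : 0 < r := Real.exp_pos _
  have hr1 : r < 1 := Real.exp_lt_one_iff.mpr (by linarith)
  set g : ℝ → ℂ := fun θ => b ((r:ℂ) * Complex.exp (Complex.I * θ)) with hg
  set G : ℝ → ℂ := fun θ => g θ * Complex.exp (-(n:ℂ) * Complex.I * θ) with hG
  -- relation to hmod's form
  have hbz : ∀ θ : ℝ, Complex.exp (-((u:ℂ) - Complex.I * (θ:ℂ)))
      = (r:ℂ) * Complex.exp (Complex.I * θ) := by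
    intro θ
    rw [show -((u:ℂ) - Complex.I * θ) = ((-u : ℝ) : ℂ) + Complex.I * θ by push_cast; ring,
      Complex.exp_add, ← Complex.ofReal_exp]
  -- coefficient formula
  have hI : (∫ θ : ℝ in (-π)..π, G θ) = 2 * π * c n * (r:ℂ) ^ n :=
    coeff_formula b c hc r hr0 hr1 n
  -- continuity
  have hzc : Continuous fun θ : ℝ => (r:ℂ) * Complex.exp (Complex.I * θ) := by fun_prop
  have hzmem : ∀ θ : ℝ, (r:ℂ) * Complex.exp (Complex.I * θ) ∈ Metric.ball (0:ℂ) 1 := by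
    intro θ
    simp only [Metric.mem_ball, dist_zero_right, norm_mul, Complex.norm_real, Real.norm_eq_abs,
      Complex.norm_exp, abs_of_pos hr0]
    have : (Complex.I * (θ:ℂ)).re = 0 := by simp
    rw [this, Real.exp_zero, mul_one]
    exact hr1
  have hgc : Continuous g := hb.continuousOn.comp_continuous hzc hzmem
  have hGc : Continuous G := by
    apply hgc.mul
    fun_prop
  -- periodicity
  have hGper : Function.Periodic G (2*π) := by
    intro θ
    have e1 : Complex.exp (Complex.I * ((θ + 2*π : ℝ):ℂ)) = Complex.exp (Complex.I * θ) := by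
      rw [show Complex.I * ((θ + 2*π : ℝ):ℂ)
          = Complex.I * (θ:ℂ) + (1:ℤ) * (2*π*Complex.I) by push_cast; ring,
        Complex.exp_add, Complex.exp_int_mul_two_pi_mul_I, mul_one]
    have hone : Complex.exp (-(n:ℂ) * (2*π*Complex.I)) = 1 := by
      have h5 := Complex.exp_int_mul_two_pi_mul_I (-(n:ℤ))
      push_cast at h5
      exact h5
    have e2 : Complex.exp (-(n:ℂ) * Complex.I * ((θ + 2*π : ℝ):ℂ))
        = Complex.exp (-(n:ℂ) * Complex.I * θ) := by
      rw [show -(n:ℂ) * Complex.I * ((θ + 2*π : ℝ):ℂ)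
          = -(n:ℂ) * Complex.I * (θ:ℂ) + (-(n:ℂ)) * (2*π*Complex.I) by push_cast; ring,
        Complex.exp_add, hone, mul_one]
    simp only [hG, hg, e1, e2]
  -- the shift
  set h : ℝ := π / n with hh_def
  have hh0 : 0 < h := by positivity
  have hnh : (n:ℝ) * h = π := by rw [hh_def]; field_simp
  have hexph : Complex.exp (-(n:ℂ) * Complex.I * (h:ℂ)) = -1 := by
    rw [show -(n:ℂ) * Complex.I * (h:ℂ) = -(((n:ℝ) * h : ℝ):ℂ) * Complex.I by push_cast; ring,
      hnh]
    rw [show -(π:ℂ) * Complex.I = -(π * Complex.I) by ring, Complex.exp_neg,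
      Complex.exp_pi_mul_I]
    norm_num
  have hJ : (∫ θ : ℝ in (-π)..π, g (θ + h) * Complex.exp (-(n:ℂ) * Complex.I * θ))
      = -∫ θ : ℝ in (-π)..π, G θ := by
    have step1 : ∀ θ : ℝ, g (θ + h) * Complex.exp (-(n:ℂ) * Complex.I * θ) = -G (θ + h) := by
      intro θ
      have : Complex.exp (-(n:ℂ) * Complex.I * ((θ + h : ℝ):ℂ))
          = Complex.exp (-(n:ℂ) * Complex.I * (θ:ℂ))
            * Complex.exp (-(n:ℂ) * Complex.I * (h:ℂ)) := by
        rw [← Complex.exp_add]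
        congr 1
        push_cast
        ring
      simp only [hG, this, hexph]
      ring
    rw [intervalIntegral.integral_congr (g := fun θ => -G (θ + h)) (fun θ _ => step1 θ)]
    rw [intervalIntegral.integral_neg, neg_inj]
    rw [intervalIntegral.integral_comp_add_right (fun x => G x) h]
    have := hGper.intervalIntegral_add_eq (-π + h) (-π)
    rw [show -π + h + 2*π = π + h by ring, show -π + 2*π = π by ring] at this
    exact this
  -- 2 I = ∫ (g θ - g (θ+h)) e^{-inθ}
  have hIint : IntervalIntegrable G MeasureTheory.volume (-π) π := hGc.intervalIntegrable _ _
  have hJint : IntervalIntegrable (fun θ => g (θ + h) * Complex.exp (-(n:ℂ) * Complex.I * θ))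
      MeasureTheory.volume (-π) π := by
    apply Continuous.intervalIntegrable
    have : Continuous fun θ : ℝ => g (θ + h) := hgc.comp (by fun_prop)
    fun_prop
  have hD : (∫ θ : ℝ in (-π)..π, (g θ - g (θ + h)) * Complex.exp (-(n:ℂ) * Complex.I * θ))
      = 2 * (2 * π * c n * (r:ℂ) ^ n) := by
    have : ∀ θ : ℝ, (g θ - g (θ + h)) * Complex.exp (-(n:ℂ) * Complex.I * θ)
        = G θ - g (θ + h) * Complex.exp (-(n:ℂ) * Complex.I * θ) := by
      intro θ; simp only [hG]; ring
    rw [intervalIntegral.integral_congr (fun θ _ => this θ),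
      intervalIntegral.integral_sub hIint hJint, hJ, hI]
    ring
  -- pointwise bound
  have hptwise : ∀ θ : ℝ, θ ∈ Set.Ioc (-π) π → θ ≠ 0 →
      ‖(g θ - g (θ + h)) * Complex.exp (-(n:ℂ) * Complex.I * θ)‖
        ≤ C2 * h ^ β * |θ| ^ (-β) := by
    intro θ hθ hθ0
    have habs1 : ‖Complex.exp (-(n:ℂ) * Complex.I * (θ:ℂ))‖ = 1 := by
      rw [Complex.norm_exp]
      have : (-(n:ℂ) * Complex.I * (θ:ℂ)).re = 0 := by simp
      rw [this, Real.exp_zero]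
    rw [norm_mul, habs1, mul_one]
    have e1 : g θ = b (Complex.exp (-((u:ℂ) - Complex.I * (θ:ℂ)))) := by
      rw [hbz θ]
    have e2 : g (θ + h) = b (Complex.exp (-((u:ℂ) - Complex.I * ((θ:ℂ) + (h:ℂ))))) := by
      have := hbz (θ + h)
      rw [hg]
      rw [show -((u:ℂ) - Complex.I * ((θ:ℂ) + (h:ℂ)))
        = -((u:ℂ) - Complex.I * (((θ + h : ℝ)):ℂ)) by push_cast; ring, this]
    rw [e1, e2, ← norm_neg, neg_sub]
    calc ‖(b (Complex.exp (-((u:ℂ) - Complex.I * ((θ:ℂ) + (h:ℂ)))))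
          - b (Complex.exp (-((u:ℂ) - Complex.I * (θ:ℂ)))))‖
        ≤ C2 * h ^ β * (‖((u:ℂ) - Complex.I * (θ:ℂ))‖) ^ (-β) :=
          hmod u h θ hu hh0 hθ
      _ ≤ C2 * h ^ β * |θ| ^ (-β) := by
          apply mul_le_mul_of_nonneg_left _ (by positivity)
          apply Real.rpow_le_rpow_of_nonpos (abs_pos.mpr hθ0) _ (by linarith)
          calc |θ| = |((u:ℂ) - Complex.I * (θ:ℂ)).im| := by simp
            _ ≤ ‖((u:ℂ) - Complex.I * (θ:ℂ))‖ := Complex.abs_im_le_norm _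
  -- integrability of the bound
  have hrpow_int : IntervalIntegrable (fun θ : ℝ => |θ| ^ (-β)) MeasureTheory.volume (-π) π := by
    have h1 : IntervalIntegrable (fun θ : ℝ => |θ| ^ (-β)) MeasureTheory.volume 0 π := by
      have h2 : IntervalIntegrable (fun θ : ℝ => θ ^ (-β)) MeasureTheory.volume 0 π :=
        intervalIntegrable_rpow' (by linarith)
      apply h2.congr_ae
      rw [Set.uIoc_of_le pi_pos.le]
      filter_upwards [MeasureTheory.ae_restrict_mem measurableSet_Ioc] with x hx
      rw [abs_of_pos hx.1]
    have h3 : IntervalIntegrable (fun θ : ℝ => |θ| ^ (-β)) MeasureTheory.volume (-π) 0 := by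
      have h4 := (IntervalIntegrable.iff_comp_neg (f := fun θ : ℝ => |θ| ^ (-β)) (a := 0) (b := π)).mp h1
      simp only [abs_neg, neg_zero] at h4
      exact h4.symm
    exact h3.trans h1
  have hbnd_int : IntervalIntegrable (fun θ : ℝ => C2 * h ^ β * |θ| ^ (-β))
      MeasureTheory.volume (-π) π := hrpow_int.const_mul _
  -- the integral of the bound
  have hbnd_val : (∫ θ : ℝ in (-π)..π, |θ| ^ (-β)) = 2 * π ^ (1-β) / (1-β) := by
    have hval : (∫ θ : ℝ in (0:ℝ)..π, |θ| ^ (-β)) = π ^ (1-β) / (1-β) := by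
      rw [intervalIntegral.integral_congr (g := fun θ : ℝ => θ ^ (-β))]
      · rw [integral_rpow (Or.inl (by linarith))]
        rw [Real.zero_rpow (by intro hcon; linarith)]
        rw [show -β + 1 = 1 - β by ring]
        ring
      · intro x hx
        rw [Set.uIcc_of_le pi_pos.le] at hx
        simp only
        rw [_root_.abs_of_nonneg hx.1]
    have hneg : (∫ θ : ℝ in (-π)..(0:ℝ), |θ| ^ (-β)) = π ^ (1-β) / (1-β) := by
      have : (∫ θ : ℝ in (-π)..(0:ℝ), |θ| ^ (-β))
          = ∫ θ : ℝ in (-π)..(0:ℝ), |(-θ)| ^ (-β) := by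
        apply intervalIntegral.integral_congr
        intro x _
        show |x| ^ (-β) = |(-x)| ^ (-β)
        rw [abs_neg]
      rw [this, intervalIntegral.integral_comp_neg (fun θ : ℝ => |θ| ^ (-β))]
      simpa using hval
    have hsplit := intervalIntegral.integral_add_adjacent_intervals
      (a := -π) (b := 0) (c := π)
      (hrpow_int.mono_set (by rw [Set.uIcc_of_le hpi, Set.uIcc_of_le (by linarith [pi_pos] : (-π:ℝ) ≤ 0)]; exact Set.Icc_subset_Icc le_rfl pi_pos.le))
      (hrpow_int.mono_set (by rw [Set.uIcc_of_le hpi, Set.uIcc_of_le pi_pos.le]; exact Set.Icc_subset_Icc (by linarith [pi_pos]) le_rfl))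
    rw [← hsplit, hval, hneg]
    ring
  -- norm bound on the integral
  have hDbound : ‖(∫ θ : ℝ in (-π)..π, (g θ - g (θ + h)) * Complex.exp (-(n:ℂ) * Complex.I * θ))‖
      ≤ C2 * h ^ β * (2 * π ^ (1-β) / (1-β)) := by
    have key := intervalIntegral.norm_integral_le_abs_of_norm_le
      (f := fun θ => (g θ - g (θ + h)) * Complex.exp (-(n:ℂ) * Complex.I * θ))
      (g := fun θ => C2 * h ^ β * |θ| ^ (-β)) (μ := MeasureTheory.volume)
      ?_ hbnd_int
    · refine key.trans ?_
      rw [intervalIntegral.integral_const_mul, hbnd_val]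
      have h1β : (0:ℝ) < 1 - β := by linarith
      rw [_root_.abs_of_nonneg (by positivity)]
    · have h0 : ∀ᵐ θ : ℝ ∂(MeasureTheory.volume.restrict (Set.uIoc (-π) π)), θ ≠ 0 := by
        apply MeasureTheory.ae_restrict_of_ae
        rw [MeasureTheory.ae_iff]
        have : {a : ℝ | ¬a ≠ 0} = {0} := by ext x; simp
        rw [this]
        exact MeasureTheory.measure_singleton 0
      filter_upwards [h0, MeasureTheory.ae_restrict_mem measurableSet_uIoc] with θ hθ0 hθ
      rw [Set.uIoc_of_le hpi] at hθ
      exact hptwise θ hθ hθ0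
  -- putting it together
  have hrn : r ^ n = Real.exp (-1) := by
    rw [hr_def, ← Real.exp_nat_mul]
    congr 1
    rw [hu_def]
    field_simp
  have habsD : ‖(∫ θ : ℝ in (-π)..π, (g θ - g (θ + h)) * Complex.exp (-(n:ℂ) * Complex.I * θ))‖
      = 4 * π * Real.exp (-1) * ‖c n‖ := by
    rw [hD]
    simp only [norm_mul, map_mul, Complex.norm_real, Real.norm_eq_abs, Complex.norm_two,
      norm_pow]
    rw [abs_of_pos pi_pos, abs_of_pos hr0, hrn]
    ring
  rw [habsD] at hDbound
  have hπβ : π ^ β * π ^ (1-β) = π := by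
    rw [← Real.rpow_add pi_pos]
    norm_num
  have hhβ : h ^ β = π ^ β * (n:ℝ) ^ (-β) := by
    rw [hh_def, Real.div_rpow pi_pos.le (le_of_lt npos), Real.rpow_neg (le_of_lt npos)]
    ring
  have hfinal : C2 * h ^ β * (2 * π ^ (1-β) / (1-β))
      = 4 * π * Real.exp (-1) * (Real.exp 1 * C2 / (2 * (1-β)) * (n:ℝ) ^ (-β)) := by
    rw [hhβ]
    have hexp : Real.exp (-1) * Real.exp 1 = 1 := by
      rw [← Real.exp_add]; norm_num
    have h1β : (1:ℝ) - β ≠ 0 := by intro hcon; linarith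
    calc C2 * (π ^ β * (n:ℝ) ^ (-β)) * (2 * π ^ (1-β) / (1-β))
        = 2 * C2 * (n:ℝ) ^ (-β) * (π ^ β * π ^ (1-β)) / (1-β) := by ring
      _ = 2 * C2 * (n:ℝ) ^ (-β) * π / (1-β) := by rw [hπβ]
      _ = (2 * C2 * (n:ℝ) ^ (-β) * π / (1-β)) * (Real.exp (-1) * Real.exp 1) := by
          rw [hexp, mul_one]
      _ = 4 * π * Real.exp (-1) * (Real.exp 1 * C2 / (2 * (1-β)) * (n:ℝ) ^ (-β)) := by
          field_simp
          ring
  rw [hfinal] at hDbound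
  have h4π : 0 < 4 * π * Real.exp (-1) := by positivity
  exact le_of_mul_le_mul_left hDbound h4π
end

section
/- In the setting where $\mu_0$ and $\mu_\tau$ are equivalent measures on $Y$ preserved by $f^{\varphi}$ and $f^{\tau}$ respectively, with $\varphi=\tau_\rho$ and $\bar\rho=\int_Y\rho\,d\mu_0<\infty$, one has $\bar\varphi = \bar\rho\cdot\bar\tau$, where $\bar\varphi = \int_Y \varphi\, d\mu_0$ and $\bar\tau = \int_Y \tau\, d\mu_\tau$. -/
open MeasureTheory

/-- First return time of `f` to `Y`. -/
noncomputable def tauFR {X : Type*} (f : X → X) (Y : Set X) (x : X) : ℕ :=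
  sInf {n : ℕ | 1 ≤ n ∧ f^[n] x ∈ Y}

/-- The `k`-th return time to `Y`. -/
noncomputable def tauK {X : Type*} (f : X → X) (Y : Set X) : ℕ → X → ℕ
  | 0, _ => 0
  | k + 1, x => tauK f Y k x + tauFR f Y (f^[tauK f Y k x] x)

private lemma tsum_eq_of_le_of_tsum_eq {a b : ℕ → ENNReal}
    (hab : ∀ i, a i ≤ b i) (hs : ∑' i, a i = ∑' i, b i)
    (hfin : ∑' i, a i ≠ ⊤) (i : ℕ) : a i = b i := by
  by_contra h
  exact absurd hs
    (ne_of_lt (ENNReal.tsum_lt_tsum hfin hab (lt_of_le_of_ne (hab i) h)))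

private lemma tauK_eq_sum {X : Type*} (f : X → X) (Y : Set X) (m : ℕ) (y : X) :
    tauK f Y m y = ∑ k ∈ Finset.range m, tauFR f Y (f^[tauK f Y k y] y) := by
  induction m with
  | zero => simp [tauK]
  | succ n ih => rw [tauK, Finset.sum_range_succ, ih]

theorem stmt11 {X : Type*} [MeasurableSpace X] (f : X → X) (Y : Set X)
    (μ0 μτ : Measure X) [IsProbabilityMeasure μ0] [IsProbabilityMeasure μτ]
    (hμ0Y : μ0 Yᶜ = 0) (hμτY : μτ Yᶜ = 0)
    (hequiv : μ0 ≪ μτ ∧ μτ ≪ μ0)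
    (ρ : X → ℕ) (φ : X → ℕ) (hφ : ∀ x, φ x = tauK f Y (ρ x) x)
    (hpres0 : MeasurePreserving (fun x => f^[φ x] x) μ0 μ0)
    (hpresτ : MeasurePreserving (fun x => f^[tauFR f Y x] x) μτ μτ)
    (hρint : Integrable (fun x => (ρ x : ℝ)) μ0)
    (ρbar : ℝ) (hρbar : ρbar = ∫ x, (ρ x : ℝ) ∂μ0)
    (hμτ : ∀ A : Set X, MeasurableSet A → (μτ A).toReal
      = (1 / ρbar) * ∑' k : ℕ, (μ0 {y | k < ρ y ∧ f^[tauK f Y k y] y ∈ A}).toReal)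
    (hφint : Integrable (fun x => (φ x : ℝ)) μ0)
    (hτint : Integrable (fun x => (tauFR f Y x : ℝ)) μτ) :
    ∫ x, (φ x : ℝ) ∂μ0 = ρbar * ∫ x, (tauFR f Y x : ℝ) ∂μτ := by
  classical
  set τf := tauFR f Y with hτf
  set T : ℕ → X → X := fun k y => f^[tauK f Y k y] y with hT
  set P : ℕ → Set X := fun k => {y | k < ρ y} with hP
  set S : Set X → ℕ → Set X := fun A k => {y | k < ρ y ∧ T k y ∈ A} with hS
  set R : ENNReal := ENNReal.ofReal ρbar with hR
  -- rewrite hμτ in terms of S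
  have hμτ' : ∀ A : Set X, MeasurableSet A → (μτ A).toReal
      = (1 / ρbar) * ∑' k : ℕ, (μ0 (S A k)).toReal := hμτ
  -- Step A: total mass
  have htoReal : ∀ (c : ℕ → Set X), ∑' (k : ℕ), (μ0 (c k)).toReal = (∑' (k : ℕ), μ0 (c k)).toReal := by
    intro c
    exact (ENNReal.tsum_toReal_eq (fun k => measure_ne_top μ0 _)).symm
  have huniv := hμτ' Set.univ MeasurableSet.univ
  have hSuniv : ∀ k, S Set.univ k = P k := by
    intro k; ext y; simp [hS, hP]
  have huniv' : (1 : ℝ) = (1 / ρbar) * (∑' (k : ℕ), μ0 (P k)).toReal := by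
    have h1 : (μτ Set.univ).toReal = 1 := by simp
    rw [h1] at huniv
    have hts : ∑' (k : ℕ), (μ0 (S Set.univ k)).toReal = (∑' (k : ℕ), μ0 (P k)).toReal := by
      rw [htoReal]
      exact congrArg ENNReal.toReal (tsum_congr fun k => congrArg μ0 (hSuniv k))
    rw [hts] at huniv
    exact huniv
  have hFfin : ∑' (k : ℕ), μ0 (P k) ≠ ⊤ := by
    intro h
    rw [h] at huniv'
    simp at huniv'
  have hρ0 : ρbar ≠ 0 := by
    intro h
    rw [h] at huniv'
    simp at huniv'
  have hFval : (∑' (k : ℕ), μ0 (P k)).toReal = ρbar := by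
    field_simp at huniv'
    linarith
  have hρpos : 0 < ρbar := by
    rw [← hFval]
    exact lt_of_le_of_ne ENNReal.toReal_nonneg (by rw [hFval]; exact Ne.symm hρ0)
  have hF : ∑' (k : ℕ), μ0 (P k) = R := by
    rw [hR, ← hFval, ENNReal.ofReal_toReal hFfin]
  have hRfin : R ≠ ⊤ := ENNReal.ofReal_ne_top
  -- master identity in ℝ≥0∞
  have hSsubP : ∀ (A : Set X) k, S A k ⊆ P k := fun A k y hy => hy.1
  have H : ∀ A : Set X, MeasurableSet A → ∑' (k : ℕ), μ0 (S A k) = R * μτ A := by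
    intro A hA
    have hle : ∑' (k : ℕ), μ0 (S A k) ≤ ∑' (k : ℕ), μ0 (P k) :=
      ENNReal.tsum_le_tsum fun k => measure_mono (hSsubP A k)
    have hfin : ∑' (k : ℕ), μ0 (S A k) ≠ ⊤ := by
      intro h; rw [h] at hle; exact hFfin (top_le_iff.mp hle)
    have h1 := hμτ' A hA
    rw [htoReal] at h1
    have h2 : ρbar * (μτ A).toReal = (∑' (k : ℕ), μ0 (S A k)).toReal := by
      rw [h1]; field_simp
    have h3 := congrArg ENNReal.ofReal h2
    rw [ENNReal.ofReal_mul hρpos.le, ENNReal.ofReal_toReal (measure_ne_top μτ A),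
      ENNReal.ofReal_toReal hfin] at h3
    exact h3.symm
  -- null sets transfer
  have hnull : ∀ A : Set X, MeasurableSet A → μτ A = 0 → ∀ k, μ0 (S A k) = 0 := by
    intro A hA h0 k
    have := H A hA
    rw [h0, mul_zero] at this
    exact ENNReal.tsum_eq_zero.mp this k
  -- measurable versions
  obtain ⟨g₀, hg₀meas, hg₀⟩ : ∃ g₀ : X → ℝ, Measurable g₀ ∧
      (fun x => (τf x : ℝ)) =ᵐ[μτ] g₀ := by
    have h := hτint.aemeasurable
    exact ⟨h.mk _, h.measurable_mk, h.ae_eq_mk⟩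
  set N' : Set X := toMeasurable μτ {x | (τf x : ℝ) ≠ g₀ x} with hN'
  have hN'meas : MeasurableSet N' := measurableSet_toMeasurable _ _
  have hN'null : μτ N' = 0 := by
    rw [hN', measure_toMeasurable]
    exact hg₀
  have hN'sub : {x | (τf x : ℝ) ≠ g₀ x} ⊆ N' := subset_toMeasurable _ _
  have hZ : ∀ k, μ0 (S N' k) = 0 := hnull N' hN'meas hN'null
  obtain ⟨ρ₀, hρ₀meas, hρ₀⟩ : ∃ ρ₀ : X → ℝ, Measurable ρ₀ ∧
      (fun x => (ρ x : ℝ)) =ᵐ[μ0] ρ₀ := by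
    have h := hρint.aemeasurable
    exact ⟨h.mk _, h.measurable_mk, h.ae_eq_mk⟩
  set M' : Set X := toMeasurable μ0 {x | (ρ x : ℝ) ≠ ρ₀ x} with hM'
  have hM'null : μ0 M' = 0 := by
    rw [hM', measure_toMeasurable]
    exact hρ₀
  have hM'sub : {x | (ρ x : ℝ) ≠ ρ₀ x} ⊆ M' := subset_toMeasurable _ _
  set P' : ℕ → Set X := fun k => {x | (k : ℝ) < ρ₀ x} with hP'
  have hP'meas : ∀ k, MeasurableSet (P' k) := fun k =>
    measurableSet_lt measurable_const hρ₀meas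
  have hPsubP' : ∀ k, P k \ P' k ⊆ M' := by
    intro k y hy
    apply hM'sub
    intro h
    exact hy.2 (by simpa [hP', ← h] using (Nat.cast_lt (α := ℝ)).mpr hy.1)
  have hP'subP : ∀ k, P' k \ P k ⊆ M' := by
    intro k y hy
    apply hM'sub
    intro h
    have := hy.1
    rw [hP'] at this
    simp only [Set.mem_setOf_eq, ← h, Nat.cast_lt] at this
    exact hy.2 this
  have hPP' : ∀ k, μ0 (P k) = μ0 (P' k) := by
    intro k
    apply le_antisymm
    · calc μ0 (P k) ≤ μ0 (P' k ∪ M') :=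
            measure_mono (fun y hy => by
              by_cases h : y ∈ P' k
              · exact Set.mem_union_left _ h
              · exact Set.mem_union_right _ (hPsubP' k ⟨hy, h⟩))
        _ ≤ μ0 (P' k) + μ0 M' := measure_union_le _ _
        _ = μ0 (P' k) := by rw [hM'null, add_zero]
    · calc μ0 (P' k) ≤ μ0 (P k ∪ M') :=
            measure_mono (fun y hy => by
              by_cases h : y ∈ P k
              · exact Set.mem_union_left _ h
              · exact Set.mem_union_right _ (hP'subP k ⟨hy, h⟩))
        _ ≤ μ0 (P k) + μ0 M' := measure_union_le _ _
        _ = μ0 (P k) := by rw [hM'null, add_zero]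
  -- the level sets of g₀
  set E : ℕ → Set X := fun m => g₀ ⁻¹' {(m : ℝ)} with hE
  have hEmeas : ∀ m, MeasurableSet (E m) := fun m => hg₀meas (measurableSet_singleton _)
  have hEdisj : Pairwise (Function.onFun Disjoint E) := by
    intro m l hml
    apply Set.disjoint_left.mpr
    intro x hxm hxl
    exact hml (Nat.cast_injective (hxm.symm.trans hxl))
  have hEcover : μτ (⋃ m, E m)ᶜ = 0 := by
    apply measure_mono_null _ hN'null
    intro x hx
    apply hN'sub
    intro h
    exact hx (Set.mem_iUnion.mpr ⟨τf x, by simp [hE, ← h]⟩)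
  have hEsum : ∑' (m : ℕ), μτ (E m) = 1 := by
    rw [← measure_iUnion hEdisj hEmeas]
    apply le_antisymm prob_le_one
    calc (1 : ENNReal) = μτ ((⋃ m, E m) ∪ (⋃ m, E m)ᶜ) := by
          rw [Set.union_compl_self]; exact measure_univ.symm
      _ ≤ μτ (⋃ m, E m) + μτ (⋃ m, E m)ᶜ := measure_union_le _ _
      _ = μτ (⋃ m, E m) := by rw [hEcover, add_zero]
  -- P k is a.e. covered by the C's
  have hPsubC : ∀ k, P k ⊆ (⋃ m, S (E m) k) ∪ S N' k := by
    intro k y hy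
    by_cases h : T k y ∈ N'
    · exact Set.mem_union_right _ ⟨hy, h⟩
    · apply Set.mem_union_left
      apply Set.mem_iUnion.mpr
      refine ⟨τf (T k y), hy, ?_⟩
      have : (τf (T k y) : ℝ) = g₀ (T k y) := by
        by_contra hc
        exact h (hN'sub hc)
      simp [hE, ← this]
  have hq : ∀ k, (∑' (m : ℕ), μ0 (S (E m) k)) = μ0 (P k) := by
    have hle : ∀ k, μ0 (P k) ≤ ∑' (m : ℕ), μ0 (S (E m) k) := by
      intro k
      calc μ0 (P k) ≤ μ0 ((⋃ m, S (E m) k) ∪ S N' k) := measure_mono (hPsubC k)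
        _ ≤ μ0 (⋃ m, S (E m) k) + μ0 (S N' k) := measure_union_le _ _
        _ = μ0 (⋃ m, S (E m) k) := by rw [hZ k, add_zero]
        _ ≤ ∑' (m : ℕ), μ0 (S (E m) k) := measure_iUnion_le _
    have hsum : ∑' (k : ℕ), ∑' (m : ℕ), μ0 (S (E m) k) = R := by
      rw [ENNReal.tsum_comm]
      calc ∑' (m : ℕ), ∑' (k : ℕ), μ0 (S (E m) k) = ∑' (m : ℕ), R * μτ (E m) :=
            tsum_congr fun (m : ℕ) => H (E m) (hEmeas m)
        _ = R * ∑' (m : ℕ), μτ (E m) := ENNReal.tsum_mul_left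
        _ = R := by rw [hEsum, mul_one]
    intro k
    exact (tsum_eq_of_le_of_tsum_eq hle (hF.trans hsum.symm) hFfin k).symm
  -- Step D: for each k, a measurable a.e. version of the k-th summand
  have key : ∀ k : ℕ, ∃ u : X → ENNReal, Measurable u ∧
      ((fun y => if k < ρ y then (τf (T k y) : ENNReal) else 0) =ᵐ[μ0] u) ∧
      ∫⁻ y, u y ∂μ0 = ∑' (m : ℕ), (m : ENNReal) * μ0 (S (E m) k) := by
    intro k
    set C : ℕ → Set X := fun m => S (E m) k with hC
    set Hm : ℕ → Set X := fun m => toMeasurable μ0 (C m) with hHm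
    have hHmeas : ∀ m, MeasurableSet (Hm m) := fun m => measurableSet_toMeasurable _ _
    have hHC : ∀ m, μ0 (Hm m) = μ0 (C m) := fun m => measure_toMeasurable _
    set G : ℕ → Set X := disjointed Hm with hG
    have hGmeas : ∀ m, MeasurableSet (G m) := MeasurableSet.disjointed hHmeas
    have hGdisj : Pairwise (Function.onFun Disjoint G) := disjoint_disjointed Hm
    have hGH : ∀ m, G m ⊆ Hm m := disjointed_subset Hm
    have hGU : ⋃ m, G m = ⋃ m, Hm m := iUnion_disjointed
    set U : Set X := ⋃ m, Hm m with hU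
    have hUmeas : MeasurableSet U := MeasurableSet.iUnion hHmeas
    have hCU : (⋃ m, C m) ⊆ U := Set.iUnion_mono fun m => subset_toMeasurable _ _
    have hPU : μ0 (P k) ≤ μ0 U := by
      calc μ0 (P k) ≤ μ0 (U ∪ S N' k) :=
            measure_mono ((hPsubC k).trans (Set.union_subset_union_left _ hCU))
        _ ≤ μ0 U + μ0 (S N' k) := measure_union_le _ _
        _ = μ0 U := by rw [hZ k, add_zero]
    have hchain : μ0 U = μ0 (P k) := by
      apply le_antisymm _ hPU
      calc μ0 U = μ0 (⋃ m, G m) := by rw [hGU]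
        _ ≤ ∑' (m : ℕ), μ0 (G m) := measure_iUnion_le _
        _ ≤ ∑' (m : ℕ), μ0 (Hm m) := ENNReal.tsum_le_tsum fun m => measure_mono (hGH m)
        _ = ∑' (m : ℕ), μ0 (C m) := tsum_congr fun (m : ℕ) => hHC m
        _ = μ0 (P k) := hq k
    have hGsum : ∑' (m : ℕ), μ0 (G m) = ∑' (m : ℕ), μ0 (Hm m) := by
      apply le_antisymm (ENNReal.tsum_le_tsum fun m => measure_mono (hGH m))
      calc ∑' (m : ℕ), μ0 (Hm m) = μ0 (P k) := by
            rw [← hq k]; exact tsum_congr fun (m : ℕ) => hHC m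
        _ ≤ μ0 U := hPU
        _ = μ0 (⋃ m, G m) := by rw [hGU]
        _ = ∑' (m : ℕ), μ0 (G m) := measure_iUnion hGdisj hGmeas
    have hGfin : ∑' (m : ℕ), μ0 (G m) ≠ ⊤ := by
      rw [← measure_iUnion hGdisj hGmeas]
      exact measure_ne_top _ _
    have hGHm : ∀ m, μ0 (G m) = μ0 (Hm m) :=
      tsum_eq_of_le_of_tsum_eq (fun m => measure_mono (hGH m)) hGsum hGfin
    have hHGnull : ∀ m, μ0 (Hm m \ G m) = 0 := by
      intro m
      rw [measure_diff (hGH m) (hGmeas m).nullMeasurableSet (measure_ne_top _ _),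
        ← hGHm m, tsub_self]
    -- the bad set
    have hUP'null : μ0 (U \ P' k) = 0 := by
      have h1 : μ0 (U ∩ P' k) + μ0 (U \ P' k) = μ0 U :=
        measure_inter_add_diff U (hP'meas k)
      have h2 : μ0 (P' k) ≤ μ0 (U ∩ P' k) := by
        calc μ0 (P' k) ≤ μ0 ((U ∩ P' k) ∪ (M' ∪ S N' k)) := by
              apply measure_mono
              intro y hy
              by_cases hyP : y ∈ P k
              · rcases hPsubC k hyP with h | h
                · exact Set.mem_union_left _ ⟨hCU h, hy⟩
                · exact Set.mem_union_right _ (Set.mem_union_right _ h)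
              · exact Set.mem_union_right _ (Set.mem_union_left _ (hP'subP k ⟨hy, hyP⟩))
          _ ≤ μ0 (U ∩ P' k) + (μ0 M' + μ0 (S N' k)) :=
              le_trans (measure_union_le _ _) (by gcongr; exact measure_union_le _ _)
          _ = μ0 (U ∩ P' k) := by rw [hM'null, hZ k]; ring
      have h3 : μ0 U ≤ μ0 (U ∩ P' k) := by
        rw [hchain, hPP' k]; exact h2
      have h4 : μ0 (U ∩ P' k) + μ0 (U \ P' k) ≤ μ0 (U ∩ P' k) + 0 := by
        rw [add_zero, h1]; exact h3
      have := (ENNReal.add_le_add_iff_left (measure_ne_top _ _)).mp h4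
      exact le_antisymm this zero_le
    set B : Set X := S N' k ∪ M' ∪ (U \ P' k) ∪ ⋃ m, (Hm m \ G m) with hB
    have hBnull : μ0 B = 0 := by
      rw [hB]
      refine measure_union_null (measure_union_null (measure_union_null ?_ hM'null) hUP'null) ?_
      · exact hZ k
      · exact measure_iUnion_null hHGnull
    refine ⟨fun y => ∑' (m : ℕ), (G m).indicator (fun _ => (m : ENNReal)) y, ?_, ?_, ?_⟩
    · exact Measurable.ennreal_tsum fun m => measurable_const.indicator (hGmeas m)
    · have : ∀ y ∉ B, (if k < ρ y then (τf (T k y) : ENNReal) else 0)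
          = ∑' (m : ℕ), (G m).indicator (fun _ => (m : ENNReal)) y := by
        intro y hyB
        rw [hB] at hyB
        simp only [Set.mem_union, not_or] at hyB
        obtain ⟨⟨⟨hy1, hy2⟩, hy3⟩, hy4⟩ := hyB
        by_cases hyP : k < ρ y
        · set m₀ := τf (T k y) with hm₀
          have hTN : T k y ∉ N' := fun h => hy1 ⟨hyP, h⟩
          have hgτ : g₀ (T k y) = (m₀ : ℝ) := by
            by_contra hc
            exact hTN (hN'sub fun h => hc h.symm)
          have hyC : y ∈ C m₀ := ⟨hyP, by simp [hE, hgτ]⟩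
          have hyH : y ∈ Hm m₀ := subset_toMeasurable _ _ hyC
          have hyG : y ∈ G m₀ := by
            by_contra hc
            exact hy4 (Set.mem_iUnion.mpr ⟨m₀, hyH, hc⟩)
          rw [if_pos hyP]
          rw [tsum_eq_single m₀ ?_]
          · rw [Set.indicator_of_mem hyG]
          · intro l hl
            apply Set.indicator_of_notMem
            intro hyl
            exact (Set.disjoint_left.mp (hGdisj hl) hyl hyG).elim
        · rw [if_neg hyP]
          symm
          apply ENNReal.tsum_eq_zero.mpr
          intro m
          apply Set.indicator_of_notMem
          intro hyG
          apply hy3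
          refine ⟨Set.mem_iUnion.mpr ⟨m, hGH m hyG⟩, ?_⟩
          intro hyP'
          apply hyP
          have hcast : (ρ y : ℝ) = ρ₀ y := by
            by_contra hc
            exact hy2 (hM'sub hc)
          have hklt : (k : ℝ) < ρ₀ y := hyP'
          rw [← hcast] at hklt
          exact_mod_cast hklt
      have hBae : ∀ᵐ y ∂μ0, y ∉ B := by
        rw [ae_iff]
        simpa using hBnull
      filter_upwards [hBae] with y hy using this y hy
    · rw [lintegral_tsum (fun m => (measurable_const.indicator (hGmeas m)).aemeasurable)]
      refine tsum_congr fun (m : ℕ) => ?_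
      rw [lintegral_indicator (hGmeas m), setLIntegral_const, hGHm m, hHC m, mul_comm]
  -- Step E: assemble
  choose u humeas huae huint using key
  have hw : ∀ y, ((φ y : ENNReal)) = ∑' (k : ℕ), (if k < ρ y then (τf (T k y) : ENNReal) else 0) := by
    intro y
    rw [hφ y, tauK_eq_sum f Y (ρ y) y]
    rw [tsum_eq_sum (s := Finset.range (ρ y))
      (fun k hk => by rw [if_neg (fun h => hk (Finset.mem_range.mpr h))])]
    rw [Nat.cast_sum]
    exact Finset.sum_congr rfl fun k hk => by rw [if_pos (Finset.mem_range.mp hk)]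
  have hL1 : ∫⁻ y, (φ y : ENNReal) ∂μ0 = ∑' (k : ℕ), ∫⁻ y, u k y ∂μ0 := by
    rw [← lintegral_tsum (fun k => (humeas k).aemeasurable)]
    apply lintegral_congr_ae
    have hall : ∀ᵐ y ∂μ0, ∀ k, (if k < ρ y then (τf (T k y) : ENNReal) else 0) = u k y :=
      ae_all_iff.mpr huae
    filter_upwards [hall] with y hy
    rw [hw y]
    exact tsum_congr hy
  have hL1' : ∫⁻ y, (φ y : ENNReal) ∂μ0 = R * ∑' (m : ℕ), (m : ENNReal) * μτ (E m) := by
    rw [hL1]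
    calc ∑' (k : ℕ), ∫⁻ y, u k y ∂μ0 = ∑' (k : ℕ), ∑' (m : ℕ), (m : ENNReal) * μ0 (S (E m) k) :=
          tsum_congr fun (k : ℕ) => huint k
      _ = ∑' (m : ℕ), ∑' (k : ℕ), (m : ENNReal) * μ0 (S (E m) k) := ENNReal.tsum_comm
      _ = ∑' (m : ℕ), (m : ENNReal) * (R * μτ (E m)) := by
          refine tsum_congr fun (m : ℕ) => ?_
          rw [ENNReal.tsum_mul_left, H (E m) (hEmeas m)]
      _ = R * ∑' (m : ℕ), (m : ENNReal) * μτ (E m) := by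
          rw [← ENNReal.tsum_mul_left]
          exact tsum_congr fun (m : ℕ) => by ring
  have hL2 : ∫⁻ x, (τf x : ENNReal) ∂μτ = ∑' (m : ℕ), (m : ENNReal) * μτ (E m) := by
    have hv : (fun x => (τf x : ENNReal)) =ᵐ[μτ]
        (fun x => ∑' (m : ℕ), (E m).indicator (fun _ => (m : ENNReal)) x) := by
      filter_upwards [hg₀] with x hx
      have hxE : x ∈ E (τf x) := by simp [hE, ← hx]
      rw [tsum_eq_single (τf x) ?_]
      · rw [Set.indicator_of_mem hxE]
      · intro l hl
        apply Set.indicator_of_notMem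
        intro hxl
        have h1 : g₀ x = (l : ℝ) := hxl
        exact hl (Nat.cast_injective (h1.symm.trans hx.symm))
    rw [lintegral_congr_ae hv,
      lintegral_tsum (fun m => (measurable_const.indicator (hEmeas m)).aemeasurable)]
    refine tsum_congr fun (m : ℕ) => ?_
    rw [lintegral_indicator (hEmeas m), setLIntegral_const, mul_comm]
  have hint1 : ∫ x, (φ x : ℝ) ∂μ0 = (∫⁻ y, (φ y : ENNReal) ∂μ0).toReal := by
    rw [integral_eq_lintegral_of_nonneg_ae
      (Filter.Eventually.of_forall fun x => by positivity) hφint.aestronglyMeasurable]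
    congr 1
    exact lintegral_congr fun x => ENNReal.ofReal_natCast _
  have hint2 : ∫ x, (τf x : ℝ) ∂μτ = (∫⁻ x, (τf x : ENNReal) ∂μτ).toReal := by
    rw [integral_eq_lintegral_of_nonneg_ae
      (Filter.Eventually.of_forall fun x => by positivity) hτint.aestronglyMeasurable]
    congr 1
    exact lintegral_congr fun x => ENNReal.ofReal_natCast _
  rw [hint1, hint2, hL1', ← hL2, ENNReal.toReal_mul, hR, ENNReal.toReal_ofReal hρpos.le]
end

section
/- Let $f=f_{\alpha,b}:[0,1]\to[0,1]$, $f(x)=x(1+bx^{\alpha})\bmod 1$ with $\alpha>0$, $b\in(0,1]$, and set $\beta=1/\alpha$. Let $e_0\in(0,1)$ with $f(e_0)=0$, $x_0=e_0$, and define $x_{n+1}\in(0,x_n)$ by $f(x_{n+1})=x_n$ (the preimages along the left branch). Then there is a constant $c^*=c^*(\alpha,b)>0$ such that $x_n = c^*(n+1)^{-\beta} + O\big((n+1)^{-(\beta+1)}\log(n+1)\big)$. -/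
open Filter Asymptotics

lemma negbern {s p : ℝ} (hs : 0 ≤ s) (hp : 0 ≤ p) : 1 - p * s ≤ (1 + s) ^ (-p) := by
  have h1 : (0:ℝ) < 1 + s := by linarith
  rw [Real.rpow_def_of_pos h1]
  have h2 : Real.log (1 + s) ≤ s := by
    have := Real.log_le_sub_one_of_pos h1; linarith
  have h3 : 0 ≤ Real.log (1 + s) := Real.log_nonneg (by linarith)
  have h4 : -(p * s) ≤ Real.log (1 + s) * (-p) := by nlinarith
  have h5 := Real.add_one_le_exp (Real.log (1 + s) * (-p))
  linarith

lemma aux_poly (m : ℕ) : ∀ t : ℝ, 0 ≤ t → t ≤ 1 → (1 + t) ^ m ≤ 1 + ((2:ℝ) ^ m - 1) * t := by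
  induction m with
  | zero => intro t h0 h1; simp
  | succ m ih =>
    intro t h0 h1
    have h2 : (1:ℝ) ≤ 2 ^ m := one_le_pow₀ (by norm_num)
    calc (1 + t) ^ (m + 1) = (1 + t) ^ m * (1 + t) := pow_succ _ _
      _ ≤ (1 + ((2:ℝ) ^ m - 1) * t) * (1 + t) := by
          have := ih t h0 h1
          nlinarith
      _ ≤ 1 + ((2:ℝ) ^ (m + 1) - 1) * t := by rw [pow_succ]; nlinarith [mul_nonneg (sub_nonneg.mpr h2) (by nlinarith : 0 ≤ t - t^2)]

lemma aux_pert {p : ℝ} (hp : 0 < p) :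
    ∃ C : ℝ, 0 < C ∧ ∀ δ : ℝ, |δ| ≤ 1/2 → |(1 + δ) ^ (-p) - 1| ≤ C * |δ| := by
  set m := ⌈p⌉₊ with hm
  refine ⟨p + 2 * 2 ^ m, by positivity, ?_⟩
  intro δ hδ
  obtain ⟨hδ1, hδ2⟩ := abs_le.mp hδ
  have h1 : (0:ℝ) < 1 + δ := by linarith
  have hm2 : (0:ℝ) ≤ 2 ^ m := by positivity
  have hm1 : (1:ℝ) ≤ 2 ^ m := one_le_pow₀ (by norm_num)
  rcases le_or_gt 0 δ with h | h
  · have hlow := negbern h hp.le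
    have hup : (1 + δ) ^ (-p) ≤ 1 :=
      Real.rpow_le_one_of_one_le_of_nonpos (by linarith) (by linarith)
    rw [abs_of_nonneg h] at *
    rw [abs_le]
    constructor <;> nlinarith
  · set t := -δ / (1 + δ) with ht
    have ht0 : 0 ≤ t := div_nonneg (by linarith) h1.le
    have ht1 : t ≤ 1 := by rw [div_le_one h1]; linarith
    have ht2 : t ≤ 2 * |δ| := by
      rw [abs_of_neg h, div_le_iff₀ h1]; nlinarith
    have hinv : (1 + δ)⁻¹ = 1 + t := by
      rw [ht]; field_simp; ring
    have key : (1 + δ) ^ (-p) = (1 + t) ^ p := by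
      rw [Real.rpow_neg h1.le, ← Real.inv_rpow h1.le, hinv]
    have h2 : (1 + t) ^ p ≤ (1 + t) ^ (m:ℝ) :=
      Real.rpow_le_rpow_of_exponent_le (by linarith) (Nat.le_ceil p)
    rw [Real.rpow_natCast] at h2
    have h3 := aux_poly m t ht0 ht1
    have hge : (1:ℝ) ≤ (1 + δ) ^ (-p) :=
      Real.one_le_rpow_of_pos_of_le_one_of_nonpos h1 (by linarith) (by linarith)
    rw [key] at hge
    rw [key, abs_of_nonneg (by linarith : (0:ℝ) ≤ (1 + t) ^ p - 1)]
    have h4 : (1 + t) ^ p - 1 ≤ ((2:ℝ) ^ m - 1) * t := by linarith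
    have habs : 0 ≤ |δ| := abs_nonneg δ
    nlinarith [mul_le_mul_of_nonneg_left ht2 (by linarith : (0:ℝ) ≤ (2:ℝ)^m - 1)]

lemma aux_log (n : ℕ) : ∑ k ∈ Finset.range n, (1:ℝ) / (k + 1) ≤ 1 + Real.log n := by
  induction n with
  | zero => simp
  | succ n ih =>
    rcases Nat.eq_zero_or_pos n with h | h
    · subst h; simp
    rw [Finset.sum_range_succ]
    have h1 : (0:ℝ) < n := by positivity
    have h2 : (1:ℝ) / (n + 1) ≤ Real.log (n + 1) - Real.log n := by
      have h3 : (0:ℝ) < (n : ℝ) / (n + 1) := by positivity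
      have h4 := Real.log_le_sub_one_of_pos h3
      rw [Real.log_div (by positivity) (by positivity)] at h4
      have h5 : (n:ℝ) / (n + 1) - 1 = -(1 / (n + 1)) := by field_simp; ring
      rw [h5] at h4; linarith
    push_cast
    linarith

set_option maxHeartbeats 2000000 in
theorem stmt14 (α b e0 : ℝ) (hα : 0 < α) (hb : b ∈ Set.Ioc (0:ℝ) 1)
    (he0 : e0 ∈ Set.Ioo (0:ℝ) 1) (hfe0 : e0 * (1 + b * e0 ^ α) = 1)
    (x : ℕ → ℝ) (hx0 : x 0 = e0)
    (hrec : ∀ n, x (n + 1) ∈ Set.Ioo 0 (x n) ∧ x (n + 1) * (1 + b * x (n + 1) ^ α) = x n) :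
    ∃ c > (0:ℝ), (fun n : ℕ => x n - c * ((n : ℝ) + 1) ^ (-(1 / α))) =O[atTop]
      (fun n : ℕ => ((n : ℝ) + 1) ^ (-(1 / α + 1)) * Real.log ((n : ℝ) + 1)) := by
  obtain ⟨hb0, hb1⟩ := hb
  obtain ⟨he1, he2⟩ := he0
  have hxpos : ∀ n, 0 < x n := by
    intro n
    cases n with
    | zero => rw [hx0]; exact he1
    | succ n => exact (hrec n).1.1
  have hxlt : ∀ n, x (n + 1) < x n := fun n => (hrec n).1.2
  set A := α * b with hA
  have hA0 : 0 < A := mul_pos hα hb0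
  set K := α * (α + 1) * b ^ 2 with hK
  have hK0 : 0 < K := by positivity
  set u : ℕ → ℝ := fun n => x n ^ (-α) with hu
  have hupos : ∀ n, 0 < u n := fun n => Real.rpow_pos_of_pos (hxpos n) _
  have hstep : ∀ n, (A - K / u (n + 1) ≤ u (n + 1) - u n) ∧ u (n + 1) - u n ≤ A := by
    intro n
    have hxp := hxpos (n + 1)
    set s := b * x (n + 1) ^ α with hs'
    have hs0 : 0 < s := mul_pos hb0 (Real.rpow_pos_of_pos hxp α)
    have hw := hupos (n + 1)
    have hsw : s * u (n + 1) = b := by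
      simp only [hu, hs']
      rw [Real.rpow_neg hxp.le]
      have hne : x (n + 1) ^ α ≠ 0 := (Real.rpow_pos_of_pos hxp α).ne'
      field_simp
    have hrw : u n = u (n + 1) * (1 + s) ^ (-α) := by
      have h1 := (hrec n).2
      simp only [hu]
      rw [← h1, Real.mul_rpow hxp.le (by nlinarith : (0:ℝ) ≤ 1 + s)]
    have hb1' : 1 - α * s ≤ (1 + s) ^ (-α) := negbern hs0.le hα.le
    have hb2 : 1 + (α + 1) * s ≤ (1 + s) ^ (α + 1) :=
      one_add_mul_self_le_rpow_one_add (by linarith) (by linarith)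
    have hb3 : 1 - (α + 1) * s ≤ (1 + s) ^ (-(α + 1)) := negbern hs0.le (by linarith)
    have h1s : (0:ℝ) < 1 + s := by linarith
    have hmul1 : (1 + s) ^ (α + 1) * (1 + s) ^ (-α) = 1 + s := by
      rw [← Real.rpow_add h1s]
      norm_num
    have hmul2 : (1 + s) ^ (α + 1) * (1 + s) ^ (-(α + 1)) = 1 := by
      rw [← Real.rpow_add h1s, add_neg_cancel, Real.rpow_zero]
    constructor
    · -- lower bound
      have h5 : α * s ≤ (1 + s) ^ (α + 1) * (1 - (1 + s) ^ (-α)) := by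
        rw [mul_sub, mul_one, hmul1]; linarith
      have hp1 : (0:ℝ) < (1 + s) ^ (-(α + 1)) := Real.rpow_pos_of_pos h1s _
      have h6 : α * s * (1 + s) ^ (-(α + 1)) ≤ 1 - (1 + s) ^ (-α) := by
        calc α * s * (1 + s) ^ (-(α + 1))
            ≤ ((1 + s) ^ (α + 1) * (1 - (1 + s) ^ (-α))) * (1 + s) ^ (-(α + 1)) :=
              mul_le_mul_of_nonneg_right h5 hp1.le
          _ = (1 + s) ^ (α + 1) * (1 + s) ^ (-(α + 1)) * (1 - (1 + s) ^ (-α)) := by ring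
          _ = 1 - (1 + s) ^ (-α) := by rw [hmul2, one_mul]
      have h7 : α * s * (1 - (α + 1) * s) ≤ 1 - (1 + s) ^ (-α) := by
        have h7a : α * s * (1 - (α + 1) * s) ≤ α * s * (1 + s) ^ (-(α + 1)) :=
          mul_le_mul_of_nonneg_left hb3 (by positivity)
        linarith
      have h8 : u (n + 1) * (α * s * (1 - (α + 1) * s)) ≤ u (n + 1) * (1 - (1 + s) ^ (-α)) :=
        mul_le_mul_of_nonneg_left h7 hw.le
      have h9 : u (n + 1) * (α * s * (1 - (α + 1) * s)) = α * b - α * (α + 1) * b * s := by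
        linear_combination (α - α * (α + 1) * s) * hsw
      have h10 : α * (α + 1) * b * s = K / u (n + 1) := by
        rw [eq_div_iff hw.ne', hK]
        linear_combination (α * (α + 1) * b) * hsw
      have h11 : u (n + 1) - u (n + 1) * (1 + s) ^ (-α) = u (n + 1) * (1 - (1 + s) ^ (-α)) := by
        ring
      rw [hrw, hA]
      linarith
    · -- upper bound
      have h2 : 1 - (1 + s) ^ (-α) ≤ α * s := by linarith
      have h3 : u (n + 1) * (1 - (1 + s) ^ (-α)) ≤ u (n + 1) * (α * s) :=
        mul_le_mul_of_nonneg_left h2 hw.le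
      have h4 : u (n + 1) * (α * s) = α * b := by linear_combination α * hsw
      rw [hrw, hA]
      nlinarith

  -- x tends to 0
  have hanti : Antitone x := (strictAnti_nat_of_succ_lt hxlt).antitone
  have hbdd : BddBelow (Set.range x) := ⟨0, by rintro y ⟨n, rfl⟩; exact (hxpos n).le⟩
  have hxlim : Tendsto x atTop (nhds (⨅ n, x n)) := tendsto_atTop_ciInf hanti hbdd
  set L := ⨅ n, x n with hL
  have hL0 : 0 ≤ L := le_ciInf fun n => (hxpos n).le
  have hLle : ∀ n, L ≤ x n := fun n => ciInf_le hbdd n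
  have hx1lim : Tendsto (fun n => x (n + 1)) atTop (nhds L) :=
    hxlim.comp (tendsto_add_atTop_nat 1)
  have hdiff : Tendsto (fun n => x n - x (n + 1)) atTop (nhds 0) := by
    have := hxlim.sub hx1lim
    simpa using this
  have hid : ∀ n, x n - x (n + 1) = b * x (n + 1) ^ (α + 1) := by
    intro n
    have h1 := (hrec n).2
    rw [Real.rpow_add_one (hxpos (n + 1)).ne']
    linear_combination -h1
  have hplim : Tendsto (fun n => x (n + 1) ^ (α + 1)) atTop (nhds 0) := by
    have h2 : Tendsto (fun n => b⁻¹ * (x n - x (n + 1))) atTop (nhds 0) := by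
      simpa using hdiff.const_mul b⁻¹
    have h3 : (fun n => b⁻¹ * (x n - x (n + 1))) = fun n => x (n + 1) ^ (α + 1) := by
      funext n; rw [hid n]; field_simp
    rwa [h3] at h2
  have hLz : L = 0 := by
    have h4 : L ^ (α + 1) ≤ 0 :=
      ge_of_tendsto hplim (Filter.Eventually.of_forall fun n =>
        Real.rpow_le_rpow hL0 (hLle (n + 1)) (by linarith))
    have h5 : 0 ≤ L ^ (α + 1) := Real.rpow_nonneg hL0 _
    have h6 : L ^ (α + 1) = 0 := le_antisymm h4 h5
    exact (Real.rpow_eq_zero hL0 (by linarith : α + 1 ≠ 0)).mp h6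
  rw [hLz] at hxlim
  -- u tends to infinity
  have hpow0 : Tendsto (fun n => x n ^ α) atTop (nhds 0) := by
    have hc : ContinuousAt (fun y : ℝ => y ^ α) 0 :=
      Real.continuousAt_rpow_const 0 α (Or.inr hα.le)
    have := hc.tendsto.comp hxlim
    simpa [Function.comp_def, Real.zero_rpow hα.ne'] using this
  have hulim : Tendsto u atTop atTop := by
    have h4 : Tendsto (fun n => x n ^ α) atTop (nhdsWithin 0 (Set.Ioi 0)) :=
      tendsto_nhdsWithin_of_tendsto_nhds_of_eventually_within _ hpow0
        (Filter.Eventually.of_forall fun n => Real.rpow_pos_of_pos (hxpos n) α)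
    have h5 := h4.inv_tendsto_nhdsGT_zero
    have heq : (fun n => x n ^ α)⁻¹ = u := by
      funext n
      simp only [Pi.inv_apply, hu]
      exact (Real.rpow_neg (hxpos n).le α).symm
    rwa [heq] at h5

  -- linear lower bound on u
  obtain ⟨N1, hN1⟩ := Filter.eventually_atTop.mp (hulim.eventually_ge_atTop (2 * K / A))
  have hhalf : ∀ n, N1 ≤ n → A / 2 ≤ u (n + 1) - u n := by
    intro n hn
    have h1 := (hstep n).1
    have h2 : 2 * K / A ≤ u (n + 1) := hN1 (n + 1) (by omega)
    have h3 : 0 < 2 * K / A := by positivity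
    have h4 : K / u (n + 1) ≤ K / (2 * K / A) :=
      div_le_div_of_nonneg_left hK0.le h3 h2
    have h5 : K / (2 * K / A) = A / 2 := by
      field_simp
    linarith [h5 ▸ h4]
  have hlin0 : ∀ m : ℕ, u N1 + A / 2 * m ≤ u (N1 + m) := by
    intro m
    induction m with
    | zero => simp
    | succ m ih =>
      have := hhalf (N1 + m) (by omega)
      have hc : ((m : ℝ) + 1) = ((m + 1 : ℕ) : ℝ) := by push_cast; ring
      calc u N1 + A / 2 * ((m + 1 : ℕ) : ℝ) = (u N1 + A / 2 * m) + A / 2 := by push_cast; ring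
        _ ≤ u (N1 + m) + A / 2 := by linarith
        _ ≤ u (N1 + (m + 1)) := by
            have heq : N1 + (m + 1) = (N1 + m) + 1 := by omega
            rw [heq]; linarith
  set N2 := 2 * N1 + 1 with hN2
  have hlin : ∀ n, N2 ≤ n → A / 4 * ((n : ℝ) + 1) ≤ u n := by
    intro n hn
    have hn1 : N1 ≤ n := by omega
    obtain ⟨m, rfl⟩ := Nat.exists_eq_add_of_le hn1
    have h1 := hlin0 m
    have hm : (N1 : ℝ) + 1 ≤ m := by
      have : N1 + 1 ≤ m := by omega
      exact_mod_cast this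
    have hcast : ((N1 + m : ℕ) : ℝ) = (N1 : ℝ) + m := by push_cast; ring
    rw [hcast]
    nlinarith [hupos N1, (by positivity : (0:ℝ) ≤ (N1:ℝ))]
  -- refined increment bound
  set K2 := 4 * K / A with hK2
  have hK20 : 0 < K2 := by positivity
  set v : ℕ → ℝ := fun n => u n - A * n with hv
  have hv1 : ∀ n, N2 ≤ n → |v (n + 1) - v n| ≤ K2 / ((n : ℝ) + 1) := by
    intro n hn
    have h1 := (hstep n).1
    have h2 := (hstep n).2
    have h3 : A / 4 * ((n : ℝ) + 1 + 1) ≤ u (n + 1) := by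
      have := hlin (n + 1) (by omega)
      push_cast at this ⊢
      linarith
    have hy : (0:ℝ) < (n : ℝ) + 1 := by positivity
    have h4 : A / 4 * ((n : ℝ) + 1) ≤ u (n + 1) := by nlinarith
    have h5 : K / u (n + 1) ≤ K2 / ((n : ℝ) + 1) := by
      rw [div_le_div_iff₀ (hupos (n + 1)) hy, hK2]
      rw [div_mul_eq_mul_div, le_div_iff₀ hA0]
      nlinarith
    have h6 : v (n + 1) - v n = u (n + 1) - u n - A := by
      simp only [hv]; push_cast; ring
    rw [h6, abs_le]
    constructor
    · linarith
    · have : (0:ℝ) < K2 / ((n:ℝ) + 1) := by positivity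
      linarith
  -- summing: log bound on v
  have hsum : ∀ n, N2 ≤ n → |v n - v N2| ≤ K2 * (1 + Real.log n) := by
    intro n hn
    have htel : v n - v N2 = ∑ k ∈ Finset.Ico N2 n, (v (k + 1) - v k) := by
      rw [Finset.sum_Ico_eq_sub _ hn, Finset.sum_range_sub (f := v),
        Finset.sum_range_sub (f := v)]
      ring
    rw [htel]
    calc |∑ k ∈ Finset.Ico N2 n, (v (k + 1) - v k)|
        ≤ ∑ k ∈ Finset.Ico N2 n, |v (k + 1) - v k| := Finset.abs_sum_le_sum_abs _ _
      _ ≤ ∑ k ∈ Finset.Ico N2 n, K2 / ((k : ℝ) + 1) :=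
          Finset.sum_le_sum fun k hk => hv1 k (Finset.mem_Ico.mp hk).1
      _ ≤ ∑ k ∈ Finset.range n, K2 / ((k : ℝ) + 1) := by
          apply Finset.sum_le_sum_of_subset_of_nonneg
          · intro k hk
            rw [Finset.mem_range]
            exact (Finset.mem_Ico.mp hk).2
          · intro k _ _
            positivity
      _ = K2 * ∑ k ∈ Finset.range n, (1:ℝ) / ((k : ℝ) + 1) := by
          rw [Finset.mul_sum]
          apply Finset.sum_congr rfl
          intro k _
          ring
      _ ≤ K2 * (1 + Real.log n) := by
          exact mul_le_mul_of_nonneg_left (aux_log n) hK20.le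

  -- constant for the log bound relative to A*(n+1)
  set C3 := |v N2| + 2 * K2 + A + 1 with hC3
  have hC30 : 0 < C3 := by positivity
  have hubound : ∀ n : ℕ, N2 ≤ n → 3 ≤ n →
      |u n - A * ((n : ℝ) + 1)| ≤ C3 * Real.log ((n : ℝ) + 1) := by
    intro n hn h3n
    have h1 := hsum n hn
    have h3r : (3:ℝ) ≤ (n : ℝ) := by exact_mod_cast h3n
    have hlogn1 : 1 ≤ Real.log n := by
      have he3 : Real.exp 1 ≤ 3 := by
        have := Real.exp_one_lt_d9; linarith
      calc (1:ℝ) = Real.log (Real.exp 1) := (Real.log_exp 1).symm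
        _ ≤ Real.log n := Real.log_le_log (Real.exp_pos 1) (by linarith)
    have hlogmono : Real.log n ≤ Real.log ((n:ℝ) + 1) :=
      Real.log_le_log (by linarith) (by linarith)
    have h2 : |u n - A * ((n:ℝ) + 1)| ≤ |v n| + A := by
      have hvn : v n = u n - A * n := by simp only [hv]
      have heq : u n - A * ((n:ℝ) + 1) = v n - A := by rw [hvn]; ring
      rw [heq]
      calc |v n - A| ≤ |v n| + |A| := abs_sub _ _
        _ = |v n| + A := by rw [abs_of_pos hA0]
    have h3 : |v n| ≤ |v N2| + K2 * (1 + Real.log n) := by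
      have h4 := abs_sub_abs_le_abs_sub (v n) (v N2)
      linarith
    have hlog1 : 1 ≤ Real.log ((n:ℝ) + 1) := le_trans hlogn1 hlogmono
    have hbig : |v N2| + K2 + A ≤ (|v N2| + K2 + A) * Real.log ((n:ℝ) + 1) :=
      le_mul_of_one_le_right (by positivity) hlog1
    have h5 : K2 * Real.log n ≤ K2 * Real.log ((n:ℝ) + 1) :=
      mul_le_mul_of_nonneg_left hlogmono hK20.le
    have h6 : (0:ℝ) ≤ Real.log ((n:ℝ) + 1) := by linarith
    rw [hC3]
    nlinarith [abs_nonneg (v N2)]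
  obtain ⟨Cp, hCp0, hCp⟩ := aux_pert (p := 1 / α) (by positivity)
  refine ⟨A ^ (-(1 / α)), Real.rpow_pos_of_pos hA0 _, ?_⟩
  set c := A ^ (-(1 / α)) with hc
  have hc0 : 0 < c := Real.rpow_pos_of_pos hA0 _
  rw [isBigO_iff]
  refine ⟨c * Cp * C3 / A, ?_⟩
  have hT : Tendsto (fun y : ℝ => Real.log y / y) atTop (nhds 0) := by
    have := Real.tendsto_pow_log_div_mul_add_atTop 1 0 1 one_ne_zero
    simpa using this
  have hcomp : Tendsto (fun n : ℕ => Real.log ((n:ℝ) + 1) / ((n:ℝ) + 1)) atTop (nhds 0) :=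
    hT.comp (tendsto_atTop_add_const_right atTop 1 tendsto_natCast_atTop_atTop)
  have hsmall : ∀ᶠ n : ℕ in atTop, Real.log ((n:ℝ) + 1) / ((n:ℝ) + 1) < A / (2 * C3) :=
    hcomp.eventually (gt_mem_nhds (by positivity))
  filter_upwards [hsmall, Filter.eventually_ge_atTop N2, Filter.eventually_ge_atTop 3]
    with n hns hn2 hn3
  set y : ℝ := (n : ℝ) + 1 with hy
  have hy0 : (0:ℝ) < y := by positivity
  have hy1 : (1:ℝ) ≤ y := by rw [hy]; have : (0:ℝ) ≤ (n:ℝ) := by positivity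
                             linarith
  have hlogy0 : 0 ≤ Real.log y := Real.log_nonneg hy1
  have hub := hubound n hn2 hn3
  set δ := (u n - A * y) / (A * y) with hδ
  have hAy : 0 < A * y := by positivity
  have hδb : |δ| ≤ C3 * Real.log y / (A * y) := by
    rw [hδ, abs_div, abs_of_pos hAy]
    exact div_le_div_of_nonneg_right hub hAy.le
  have hδhalf : |δ| ≤ 1 / 2 := by
    have h1 : C3 * Real.log y / (A * y) ≤ 1 / 2 := by
      rw [div_le_iff₀ hAy]
      rw [div_lt_iff₀ hy0] at hns
      have h2 := mul_le_mul_of_nonneg_left hns.le hC30.le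
      have h3 : C3 * (A / (2 * C3) * y) = 1 / 2 * (A * y) := by
        field_simp
      linarith
    linarith
  obtain ⟨hδl, hδr⟩ := abs_le.mp hδhalf
  have h1δ : (0:ℝ) < 1 + δ := by linarith
  have hux : u n = A * y * (1 + δ) := by
    rw [hδ]; field_simp; ring
  have hxu : x n = u n ^ (-(1 / α)) := by
    have h1 : (x n ^ (-α) : ℝ) ^ (-(1 / α)) = x n := by
      rw [← Real.rpow_mul (hxpos n).le]
      rw [show (-α) * (-(1 / α)) = 1 by field_simp]
      exact Real.rpow_one _
    simp only [hu]
    exact h1.symm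
  have hexp : x n = c * y ^ (-(1 / α)) * (1 + δ) ^ (-(1 / α)) := by
    rw [hxu, hux, Real.mul_rpow (by positivity) h1δ.le, Real.mul_rpow hA0.le hy0.le, hc]
  have hpert := hCp δ hδhalf
  have hyp : 0 < y ^ (-(1 / α)) := Real.rpow_pos_of_pos hy0 _
  have hnorm : ‖x n - c * y ^ (-(1 / α))‖ =
      c * y ^ (-(1 / α)) * |(1 + δ) ^ (-(1 / α)) - 1| := by
    rw [Real.norm_eq_abs, hexp,
      show c * y ^ (-(1 / α)) * (1 + δ) ^ (-(1 / α)) - c * y ^ (-(1 / α)) =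
        c * y ^ (-(1 / α)) * ((1 + δ) ^ (-(1 / α)) - 1) by ring,
      abs_mul, abs_of_pos (by positivity : (0:ℝ) < c * y ^ (-(1 / α)))]
  have hrhs : y ^ (-(1 / α + 1)) = y ^ (-(1 / α)) * y⁻¹ := by
    rw [show -(1 / α + 1) = (-(1 / α)) + (-1) by ring, Real.rpow_add hy0, Real.rpow_neg_one]
  rw [hnorm, Real.norm_eq_abs,
    abs_of_nonneg (mul_nonneg (Real.rpow_nonneg hy0.le _) hlogy0), hrhs]
  calc c * y ^ (-(1 / α)) * |(1 + δ) ^ (-(1 / α)) - 1|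
      ≤ c * y ^ (-(1 / α)) * (Cp * |δ|) :=
        mul_le_mul_of_nonneg_left hpert (by positivity)
    _ ≤ c * y ^ (-(1 / α)) * (Cp * (C3 * Real.log y / (A * y))) :=
        mul_le_mul_of_nonneg_left (mul_le_mul_of_nonneg_left hδb hCp0.le) (by positivity)
    _ = c * Cp * C3 / A * (y ^ (-(1 / α)) * y⁻¹ * Real.log y) := by
        field_simp
end
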